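/- Consider horizon T ≥ 1 and the COLDQ setup with strongly convex losses: 𝒳 ⊆ ℝ^p convex with ‖x − y‖ ≤ R for all x, y ∈ 𝒳 (R > 0); loss functions f_t : 𝒳 → ℝ admitting gradient/subgradient maps ∇f_t with ‖∇f_t(x)‖ ≤ D and, for some μ > 0, f_t(y) ≥ f_t(x) + ⟨∇f_t(x), y − x⟩ + μ·‖y − x‖² for all x, y ∈ 𝒳 and all t; convex constraint functions g_t^n : 𝒳 → ℝ (1 ≤ n ≤ N) with |g_t^n(x)| ≤ G on 𝒳; a nondecreasing sequence α_t > 0 with α_1 ≥ μ; nonnegative queue values Q_{t−1}^n ≥ 0; x_1 ∈ 𝒳 arbitrary, and for t ∈ {2,…,T}: x_t minimizes over 𝒳 the function Φ_t(x) = ⟨∇f_{t−1}(x_{t−1}), x − x_{t−1}⟩ + α_{t−1}·‖x − x_{t−1}‖² + Σ_{n=1}^N Q_{t−1}^n·[g_{t−1}^n(x)]_+. Let x* ∈ 𝒳 satisfy g_t^n(x*) ≤ 0 for all t and n. Then the static regret satisfies Σ_{t=1}^T [f_t(x_t) − f_t(x*)] ≤ Σ_{t=2}^{T−1} (α_t −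 α_{t−1} − μ)·‖x* − x_t‖² + (D²/4)·Σ_{t=1}^T (1/α_t) + (α_1 − μ)·R² + D·R. -/

import Mathlib

open scoped RealInnerProductSpace

lemma aux_quad_identity {E : Type*} [NormedAddCommGroup E] [InnerProductSpace ℝ E]
    (lam : ℝ) (u v : E) :
    ‖(1 - lam) • u + lam • v‖ ^ 2
      = (1 - lam) * ‖u‖ ^ 2 + lam * ‖v‖ ^ 2 - lam * (1 - lam) * ‖v - u‖ ^ 2 := by
  rw [← real_inner_self_eq_norm_sq, ← real_inner_self_eq_norm_sq,
    ← real_inner_self_eq_norm_sq, ← real_inner_self_eq_norm_sq]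
  simp only [inner_add_left, inner_add_right, inner_sub_left, inner_sub_right,
    real_inner_smul_left, real_inner_smul_right]
  rw [real_inner_comm v u]
  ring

lemma aux_strong_min {E : Type*} [NormedAddCommGroup E] [InnerProductSpace ℝ E]
    {𝒳 : Set E} (hX : Convex ℝ 𝒳) {L : E → ℝ} (hL : ConvexOn ℝ 𝒳 L)
    {α : ℝ} (hα : 0 < α) {c w y : E} (hw : w ∈ 𝒳) (hy : y ∈ 𝒳)
    (hmin : ∀ z ∈ 𝒳, L w + α * ‖w - c‖ ^ 2 ≤ L z + α * ‖z - c‖ ^ 2) :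
    L w + α * ‖w - c‖ ^ 2 + α * ‖y - w‖ ^ 2 ≤ L y + α * ‖y - c‖ ^ 2 := by
  refine le_of_forall_pos_le_add fun ε hε => ?_
  have hden : 0 < α * ‖y - w‖ ^ 2 + 1 := by positivity
  set lam := min 1 (ε / (α * ‖y - w‖ ^ 2 + 1)) with hlamdef
  have hlam0 : 0 < lam := lt_min one_pos (div_pos hε hden)
  have hlam1 : lam ≤ 1 := min_le_left _ _
  have hz : (1 - lam) • w + lam • y ∈ 𝒳 := hX hw hy (by linarith) hlam0.le (by ring)
  have hc : ((1 : ℝ) - lam) • c + lam • c = c := by rw [← add_smul]; norm_num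
  have hzc : ((1 - lam) • w + lam • y) - c = (1 - lam) • (w - c) + lam • (y - c) := by
    conv_lhs => rw [← hc]
    rw [smul_sub, smul_sub]
    abel
  have hyw : y - w = (y - c) - (w - c) := by abel
  have hquad : ‖((1 - lam) • w + lam • y) - c‖ ^ 2
      = (1 - lam) * ‖w - c‖ ^ 2 + lam * ‖y - c‖ ^ 2 - lam * (1 - lam) * ‖y - w‖ ^ 2 := by
    rw [hzc, aux_quad_identity, hyw]
  have hquad' : α * ‖((1 - lam) • w + lam • y) - c‖ ^ 2
      = α * ((1 - lam) * ‖w - c‖ ^ 2 + lam * ‖y - c‖ ^ 2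
          - lam * (1 - lam) * ‖y - w‖ ^ 2) := by rw [hquad]
  have hLz : L ((1 - lam) • w + lam • y) ≤ (1 - lam) * L w + lam * L y :=
    hL.2 hw hy (by linarith) hlam0.le (by ring)
  have hmz := hmin _ hz
  have h1 : lam * (L w + α * ‖w - c‖ ^ 2 + α * (1 - lam) * ‖y - w‖ ^ 2)
      ≤ lam * (L y + α * ‖y - c‖ ^ 2) := by nlinarith [hmz, hLz, hquad']
  have h2 : L w + α * ‖w - c‖ ^ 2 + α * (1 - lam) * ‖y - w‖ ^ 2
      ≤ L y + α * ‖y - c‖ ^ 2 := (mul_le_mul_iff_right₀ hlam0).mp h1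
  have h3 : lam * (α * ‖y - w‖ ^ 2 + 1) ≤ ε :=
    (le_div_iff₀ hden).mp (min_le_right _ _)
  nlinarith [hlam0.le]

/-- Static regret bound of COLDQ for strongly convex losses (Theorem 3). -/
theorem coldq_static_regret_strongly_convex
    (p N T : ℕ) (hT : 1 ≤ T) (R D G μ : ℝ)
    (hR : 0 < R) (hμ : 0 < μ)
    (𝒳 : Set (EuclideanSpace ℝ (Fin p)))
    (hXconv : Convex ℝ 𝒳)
    (hXbdd : ∀ x ∈ 𝒳, ∀ y ∈ 𝒳, ‖x - y‖ ≤ R)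
    (f : ℕ → EuclideanSpace ℝ (Fin p) → ℝ)
    (gradf : ℕ → EuclideanSpace ℝ (Fin p) → EuclideanSpace ℝ (Fin p))
    (hgradD : ∀ t, ∀ x ∈ 𝒳, ‖gradf t x‖ ≤ D)
    (hstrong : ∀ t, ∀ x ∈ 𝒳, ∀ y ∈ 𝒳,
      f t x + ⟪gradf t x, y - x⟫ + μ * ‖y - x‖ ^ 2 ≤ f t y)
    (g : ℕ → Fin N → EuclideanSpace ℝ (Fin p) → ℝ)
    (hgconv : ∀ t n, ConvexOn ℝ 𝒳 (g t n))
    (hgG : ∀ t n, ∀ x ∈ 𝒳, |g t n x| ≤ G)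
    (α : ℕ → ℝ) (hαpos : ∀ t, 0 < α t) (hαmono : Monotone α)
    (hα1 : μ ≤ α 1)
    (Q : ℕ → Fin N → ℝ) (hQnn : ∀ t n, 0 ≤ Q t n)
    (x : ℕ → EuclideanSpace ℝ (Fin p)) (hx1 : x 1 ∈ 𝒳)
    (hxX : ∀ t, 2 ≤ t → t ≤ T → x t ∈ 𝒳)
    (hxmin : ∀ t, 2 ≤ t → t ≤ T → ∀ y ∈ 𝒳,
      ⟪gradf (t - 1) (x (t - 1)), x t - x (t - 1)⟫
          + α (t - 1) * ‖x t - x (t - 1)‖ ^ 2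
          + ∑ n, Q (t - 1) n * max (g (t - 1) n (x t)) 0 ≤
        ⟪gradf (t - 1) (x (t - 1)), y - x (t - 1)⟫
          + α (t - 1) * ‖y - x (t - 1)‖ ^ 2
          + ∑ n, Q (t - 1) n * max (g (t - 1) n y) 0)
    (xstar : EuclideanSpace ℝ (Fin p)) (hxstarX : xstar ∈ 𝒳)
    (hxstarfeas : ∀ t, 1 ≤ t → t ≤ T → ∀ n, g t n xstar ≤ 0) :
    ∑ t ∈ Finset.Icc 1 T, (f t (x t) - f t xstar) ≤
      ∑ t ∈ Finset.Icc 2 (T - 1), (α t - α (t - 1) - μ) * ‖xstar - x t‖ ^ 2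
        + (D ^ 2 / 4) * ∑ t ∈ Finset.Icc 1 T, (1 / α t)
        + (α 1 - μ) * R ^ 2 + D * R := by
  have hD : 0 ≤ D := (norm_nonneg _).trans (hgradD 1 (x 1) hx1)
  -- per-step key bound
  have key : ∀ s, 1 ≤ s → s + 1 ≤ T →
      f s (x s) - f s xstar ≤ D ^ 2 / (4 * α s) + (α s - μ) * ‖xstar - x s‖ ^ 2
        - α s * ‖xstar - x (s + 1)‖ ^ 2 := by
    intro s hs1 hsT
    have hxs : x s ∈ 𝒳 := by
      by_cases h : s = 1
      · subst h; exact hx1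
      · exact hxX s (by omega) (by omega)
    have hxs1 : x (s + 1) ∈ 𝒳 := hxX (s + 1) (by omega) hsT
    have hmin' := hxmin (s + 1) (by omega) hsT
    simp only [Nat.add_sub_cancel] at hmin'
    set L : EuclideanSpace ℝ (Fin p) → ℝ :=
      fun z => ⟪gradf s (x s), z - x s⟫ + ∑ n, Q s n * max (g s n z) 0 with hLdef
    have hLconv : ConvexOn ℝ 𝒳 L := by
      refine ⟨hXconv, fun z1 hz1 z2 hz2 a b ha hb hab => ?_⟩
      have hinner : ⟪gradf s (x s), (a • z1 + b • z2) - x s⟫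
          = a * ⟪gradf s (x s), z1 - x s⟫ + b * ⟪gradf s (x s), z2 - x s⟫ := by
        simp only [inner_sub_right, inner_add_right, real_inner_smul_right]
        linear_combination (⟪gradf s (x s), x s⟫ : ℝ) * hab
      have hsum : ∑ n, Q s n * max (g s n (a • z1 + b • z2)) 0
          ≤ a * ∑ n, Q s n * max (g s n z1) 0 + b * ∑ n, Q s n * max (g s n z2) 0 := by
        rw [Finset.mul_sum, Finset.mul_sum, ← Finset.sum_add_distrib]
        refine Finset.sum_le_sum fun n _ => ?_
        have hgc := (hgconv s n).2 hz1 hz2 ha hb hab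
        have hmax : max (g s n (a • z1 + b • z2)) 0
            ≤ a * max (g s n z1) 0 + b * max (g s n z2) 0 := by
          refine max_le ?_ ?_
          · calc g s n (a • z1 + b • z2) ≤ a * g s n z1 + b * g s n z2 := hgc
              _ ≤ a * max (g s n z1) 0 + b * max (g s n z2) 0 := by
                  gcongr <;> exact le_max_left _ _
          · have h1 : 0 ≤ a * max (g s n z1) 0 := mul_nonneg ha (le_max_right _ _)
            have h2 : 0 ≤ b * max (g s n z2) 0 := mul_nonneg hb (le_max_right _ _)
            linarith
        calc Q s n * max (g s n (a • z1 + b • z2)) 0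
            ≤ Q s n * (a * max (g s n z1) 0 + b * max (g s n z2) 0) :=
              mul_le_mul_of_nonneg_left hmax (hQnn s n)
          _ = a * (Q s n * max (g s n z1) 0) + b * (Q s n * max (g s n z2) 0) := by ring
      simp only [hLdef, hinner, smul_eq_mul]
      linarith
    have hmin2 : ∀ z ∈ 𝒳, L (x (s + 1)) + α s * ‖x (s + 1) - x s‖ ^ 2
        ≤ L z + α s * ‖z - x s‖ ^ 2 := by
      intro z hz
      have := hmin' z hz
      simp only [hLdef]
      linarith
    have haux := aux_strong_min hXconv hLconv (hαpos s) hxs1 hxstarX hmin2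
    have hLstar : L xstar = ⟪gradf s (x s), xstar - x s⟫ := by
      have hm : ∀ n : Fin N, max (g s n xstar) 0 = 0 := fun n =>
        max_eq_right (hxstarfeas s hs1 (by omega) n)
      simp [hLdef, hm]
    have hLw : ⟪gradf s (x s), x (s + 1) - x s⟫ ≤ L (x (s + 1)) := by
      have h0 : 0 ≤ ∑ n, Q s n * max (g s n (x (s + 1))) 0 :=
        Finset.sum_nonneg fun n _ => mul_nonneg (hQnn s n) (le_max_right _ _)
      simp only [hLdef]
      linarith
    have hsc := hstrong s (x s) hxs xstar hxstarX
    have hip : -⟪gradf s (x s), x (s + 1) - x s⟫ ≤ D * ‖x (s + 1) - x s‖ := by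
      have h1 := real_inner_le_norm (gradf s (x s)) (-(x (s + 1) - x s))
      rw [inner_neg_right, norm_neg] at h1
      calc -⟪gradf s (x s), x (s + 1) - x s⟫ ≤ ‖gradf s (x s)‖ * ‖x (s + 1) - x s‖ := h1
        _ ≤ D * ‖x (s + 1) - x s‖ :=
            mul_le_mul_of_nonneg_right (hgradD s (x s) hxs) (norm_nonneg _)
    have hDsq : D * ‖x (s + 1) - x s‖ - α s * ‖x (s + 1) - x s‖ ^ 2 ≤ D ^ 2 / (4 * α s) := by
      have hα := hαpos s
      rw [le_div_iff₀ (by positivity)]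
      nlinarith [sq_nonneg (D - 2 * α s * ‖x (s + 1) - x s‖)]
    rw [hLstar] at haux
    linarith
  -- last step bound
  have hlast : ∀ t, x t ∈ 𝒳 → f t (x t) - f t xstar ≤ D * R := by
    intro t hxt
    have hsc := hstrong t (x t) hxt xstar hxstarX
    have h1 : -⟪gradf t (x t), xstar - x t⟫ ≤ D * R := by
      have h2 := real_inner_le_norm (gradf t (x t)) (-(xstar - x t))
      rw [inner_neg_right, norm_neg] at h2
      calc -⟪gradf t (x t), xstar - x t⟫ ≤ ‖gradf t (x t)‖ * ‖xstar - x t‖ := h2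
        _ ≤ D * R := mul_le_mul (hgradD t (x t) hxt) (hXbdd _ hxstarX _ hxt)
            (norm_nonneg _) hD
    have h3 : 0 ≤ μ * ‖xstar - x t‖ ^ 2 := by positivity
    linarith
  obtain ⟨S, rfl⟩ : ∃ S, T = S + 1 := ⟨T - 1, by omega⟩
  simp only [Nat.add_sub_cancel]
  have hxS1 : x (S + 1) ∈ 𝒳 := by
    rcases Nat.eq_zero_or_pos S with h | h
    · subst h; exact hx1
    · exact hxX _ (by omega) le_rfl
  have hS1 : f (S + 1) (x (S + 1)) - f (S + 1) xstar ≤ D * R := hlast _ hxS1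
  rw [Finset.sum_Icc_succ_top (by omega : 1 ≤ S + 1),
    Finset.sum_Icc_succ_top (by omega : 1 ≤ S + 1)]
  have hmain : ∑ t ∈ Finset.Icc 1 S, (f t (x t) - f t xstar)
      ≤ ∑ t ∈ Finset.Icc 1 S, (D ^ 2 / (4 * α t) + ((α t - μ) * ‖xstar - x t‖ ^ 2
          - α t * ‖xstar - x (t + 1)‖ ^ 2)) := by
    refine Finset.sum_le_sum fun t ht => ?_
    rw [Finset.mem_Icc] at ht
    have := key t ht.1 (by omega)
    linarith
  rw [Finset.sum_add_distrib] at hmain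
  have hDsum : ∑ t ∈ Finset.Icc 1 S, D ^ 2 / (4 * α t)
      ≤ D ^ 2 / 4 * (∑ t ∈ Finset.Icc 1 S, 1 / α t + 1 / α (S + 1)) := by
    rw [mul_add, Finset.mul_sum]
    have h1 : ∀ t ∈ Finset.Icc 1 S, D ^ 2 / (4 * α t) ≤ D ^ 2 / 4 * (1 / α t) := by
      intro t _
      rw [div_mul_div_comm, mul_one]
    have h2 : 0 ≤ D ^ 2 / 4 * (1 / α (S + 1)) := by
      have := hαpos (S + 1); positivity
    linarith [Finset.sum_le_sum h1]
  rcases Nat.eq_zero_or_pos S with h | hS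
  · subst h
    simp only [show Finset.Icc 1 0 = (∅ : Finset ℕ) from rfl, Finset.sum_empty,
      show Finset.Icc 2 0 = (∅ : Finset ℕ) from rfl] at *
    have h2 : 0 ≤ D ^ 2 / 4 * (0 + 1 / α 1) := by
      have := hαpos 1; positivity
    have h3 : 0 ≤ (α 1 - μ) * R ^ 2 := mul_nonneg (by linarith) (by positivity)
    linarith
  -- telescoping identity
  have htel : ∀ m, 1 ≤ m →
      ∑ t ∈ Finset.Icc 1 m, ((α t - μ) * ‖xstar - x t‖ ^ 2
          - α t * ‖xstar - x (t + 1)‖ ^ 2)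
        = (α 1 - μ) * ‖xstar - x 1‖ ^ 2
          + ∑ t ∈ Finset.Icc 2 m, (α t - α (t - 1) - μ) * ‖xstar - x t‖ ^ 2
          - α m * ‖xstar - x (m + 1)‖ ^ 2 := by
    intro m hm
    induction m, hm using Nat.le_induction with
    | base => simp [Finset.Icc_self, show Finset.Icc 2 1 = (∅ : Finset ℕ) from rfl]
    | succ n hn ih =>
      rw [Finset.sum_Icc_succ_top (by omega : 1 ≤ n + 1),
        Finset.sum_Icc_succ_top (by omega : 2 ≤ n + 1), ih]
      simp only [Nat.add_sub_cancel]
      try ring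
  rw [htel S hS] at hmain
  have hA1 : (α 1 - μ) * ‖xstar - x 1‖ ^ 2 ≤ (α 1 - μ) * R ^ 2 := by
    have hn : ‖xstar - x 1‖ ≤ R := hXbdd _ hxstarX _ hx1
    have h0 := norm_nonneg (xstar - x 1)
    have hsq : ‖xstar - x 1‖ ^ 2 ≤ R ^ 2 := by nlinarith
    exact mul_le_mul_of_nonneg_left hsq (by linarith)
  have hAS : 0 ≤ α S * ‖xstar - x (S + 1)‖ ^ 2 := by
    have := hαpos S; positivity
  linarith
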